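/- Let L = ℕ × ℕ × (ℕ ∪ {∞}) with the partial order: (n₁,i₁,j₁) ≤ (n₂,i₂,j₂) iff either (a) n₁ = n₂, i₁ = i₂ and j₁ ≤ j₂, or (b) n₁ = n₂, j₁ = i₂ = j₂ and i₁ ≤ i₂, or (c) n₂ = n₁ + 1, j₂ = ∞ and j₁ ≤ i₂, endowed with the Scott topology. Then L (the whole space) is not a KF-set of L: there is no nonempty filtered family 𝒦 of Scott-compact saturated subsets of L such that L is a minimal closed set intersecting every member of 𝒦. -/
import Mathlib


/-- The example poset `L = ℕ × ℕ × (ℕ ∪ {∞})`. -/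
abbrev MiaoL : Type := ℕ × ℕ × WithTop ℕ

/-- The order on `L`: `(n₁,i₁,j₁) ≤ (n₂,i₂,j₂)` iff
(a) `n₁ = n₂`, `i₁ = i₂` and `j₁ ≤ j₂`, or
(b) `n₁ = n₂`, `j₁ = i₂ = j₂` and `i₁ ≤ i₂`, or
(c) `n₂ = n₁ + 1`, `j₂ = ∞` and `j₁ ≤ i₂`. -/
def lleL (p q : MiaoL) : Prop :=
  (p.1 = q.1 ∧ p.2.1 = q.2.1 ∧ p.2.2 ≤ q.2.2) ∨
  (p.1 = q.1 ∧ p.2.2 = (q.2.1 : WithTop ℕ) ∧ q.2.2 = (q.2.1 : WithTop ℕ) ∧ p.2.1 ≤ q.2.1) ∨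
  (q.1 = p.1 + 1 ∧ q.2.2 = (⊤ : WithTop ℕ) ∧ p.2.2 ≤ (q.2.1 : WithTop ℕ))

/-- Directed subset with respect to a relation `r`. -/
def RDir {α : Type*} (r : α → α → Prop) (D : Set α) : Prop :=
  D.Nonempty ∧ ∀ x ∈ D, ∀ y ∈ D, ∃ z ∈ D, r x z ∧ r y z

/-- `s` is an upper bound of `D` with respect to `r`. -/
def RUB {α : Type*} (r : α → α → Prop) (D : Set α) (s : α) : Prop := ∀ d ∈ D, r d s

/-- `s` is the least upper bound (supremum) of `D` with respect to `r`. -/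
def RLUB {α : Type*} (r : α → α → Prop) (D : Set α) (s : α) : Prop :=
  RUB r D s ∧ ∀ t : α, RUB r D t → r s t

/-- Scott-open set with respect to a relation `r`: an upper set meeting every directed set
whose supremum exists and lies in it. -/
def RScottOpen {α : Type*} (r : α → α → Prop) (U : Set α) : Prop :=
  (∀ x ∈ U, ∀ y, r x y → y ∈ U) ∧
  ∀ D : Set α, RDir r D → ∀ s : α, RLUB r D s → s ∈ U → (D ∩ U).Nonempty

/-- Closed set in the Scott topology: complement of a Scott-open set. -/
def RScottClosed {α : Type*} (r : α → α → Prop) (C : Set α) : Prop := RScottOpen r Cᶜ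

/-- Closure in the Scott topology. -/
def RClosure {α : Type*} (r : α → α → Prop) (A : Set α) : Set α :=
  ⋂₀ {C : Set α | RScottClosed r C ∧ A ⊆ C}

/-- Compactness in the Scott topology: every cover by Scott-open sets has a finite
subcover. -/
def RCompact {α : Type*} (r : α → α → Prop) (K : Set α) : Prop :=
  ∀ 𝒰 : Set (Set α), (∀ U ∈ 𝒰, RScottOpen r U) → K ⊆ ⋃₀ 𝒰 →
    ∃ 𝒱 ⊆ 𝒰, 𝒱.Finite ∧ K ⊆ ⋃₀ 𝒱

/-- Saturated set: an upper set with respect to `r`. -/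
def RSat {α : Type*} (r : α → α → Prop) (K : Set α) : Prop :=
  ∀ x ∈ K, ∀ y, r x y → y ∈ K

lemma level_le {p q : MiaoL} (h : lleL p q) : q.1 = p.1 ∨ q.1 = p.1 + 1 := by
  rcases h with ⟨h1, _⟩ | ⟨h1, _⟩ | ⟨h1, _⟩
  · exact Or.inl h1.symm
  · exact Or.inl h1.symm
  · exact Or.inr h1

lemma miao_ext {p q : MiaoL} (h1 : p.1 = q.1) (h2 : p.2.1 = q.2.1)
    (h3 : p.2.2 = q.2.2) : p = q := by
  obtain ⟨a, b, c⟩ := p; obtain ⟨d, e, f⟩ := q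
  simp_all

lemma mem_of_proj {D : Set MiaoL} {d : MiaoL} (hd : d ∈ D) {r k : ℕ}
    {c : WithTop ℕ} (h1 : d.1 = r) (h2 : d.2.1 = k) (h3 : d.2.2 = c) :
    ((r, k, c) : MiaoL) ∈ D := by
  have hde : d = ((r, k, c) : MiaoL) := miao_ext h1 h2 h3
  exact hde ▸ hd

lemma lub_struct {D : Set MiaoL} {s : MiaoL}
    (hdir : RDir lleL D) (hlub : RLUB lleL D s) (hns : s ∉ D) :
    s.2.2 = ⊤ ∧ ∀ M : ℕ, ∃ j : ℕ, M ≤ j ∧ (s.1, s.2.1, (j : WithTop ℕ)) ∈ D := by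
  obtain ⟨hub, hleast⟩ := hlub
  -- Step A: every element of D is at level s.1
  have hlevel : ∀ d ∈ D, d.1 = s.1 := by
    by_contra hcon
    push_neg at hcon
    obtain ⟨d₀, hd₀D, hd₀⟩ := hcon
    by_cases hex : ∃ d₂ ∈ D, d₂.1 = s.1
    · obtain ⟨d₂, hd₂D, hd₂⟩ := hex
      obtain ⟨z, hzD, hz0, hz2⟩ := hdir.2 d₀ hd₀D d₂ hd₂D
      have hc0 : s.1 = d₀.1 + 1 := by
        rcases hub d₀ hd₀D with ⟨h1, _⟩ | ⟨h1, _⟩ | ⟨h1, _⟩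
        · exact absurd h1 hd₀
        · exact absurd h1 hd₀
        · exact h1
      have hz1 : z.1 = s.1 := by
        rcases level_le hz2 with h | h
        · omega
        · rcases level_le (hub z hzD) with h' | h' <;> omega
      have hz22 : z.2.2 = ⊤ := by
        rcases hz0 with ⟨h1, _⟩ | ⟨h1, _⟩ | ⟨_, h2, _⟩
        · omega
        · omega
        · exact h2
      rcases hub z hzD with ⟨h1, h2, h3⟩ | ⟨h1, h2, h3, h4⟩ | ⟨h1, h2, h3⟩
      · rw [hz22] at h3
        have hce : s.2.2 = ⊤ := top_le_iff.mp h3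
        have hzs : z = s := miao_ext h1 h2 (hz22.trans hce.symm)
        exact hns (hzs ▸ hzD)
      · rw [hz22] at h2
        exact absurd h2.symm (WithTop.coe_ne_top)
      · omega
    · push_neg at hex
      have hub' : RUB lleL D (s.1, s.2.1 + 1, ⊤) := by
        intro d hd
        rcases hub d hd with ⟨h1, _⟩ | ⟨h1, _⟩ | ⟨h1, h2, h3⟩
        · exact absurd h1 (hex d hd)
        · exact absurd h1 (hex d hd)
        · refine Or.inr (Or.inr ⟨h1, rfl, ?_⟩)
          refine le_trans h3 ?_
          exact_mod_cast WithTop.coe_le_coe.mpr (Nat.le_succ _)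
      rcases hleast _ hub' with ⟨h1, h2, h3⟩ | ⟨h1, h2, h3, h4⟩ | ⟨h1, h2, h3⟩
      · simp at h2
      · exact absurd h3.symm WithTop.coe_ne_top
      · simp at h1
  -- Step B: shape of elements
  have shape : ∀ d ∈ D, (d.2.1 = s.2.1 ∧ d.2.2 ≤ s.2.2) ∨
      (d.2.2 = (s.2.1 : WithTop ℕ) ∧ s.2.2 = (s.2.1 : WithTop ℕ) ∧ d.2.1 ≤ s.2.1) := by
    intro d hd
    rcases hub d hd with ⟨_, h2, h3⟩ | ⟨_, h2, h3, h4⟩ | ⟨h1, _, _⟩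
    · exact Or.inl ⟨h2, h3⟩
    · exact Or.inr ⟨h2, h3, h4⟩
    · have := hlevel d hd; omega
  -- Step C: all elements have second coordinate = s.2.1
  have hsecond : ∀ d ∈ D, d.2.1 = s.2.1 := by
    by_contra hcon
    push_neg at hcon
    obtain ⟨d, hdD, hdk⟩ := hcon
    obtain ⟨hd22, hck, hdk'⟩ : d.2.2 = (s.2.1 : WithTop ℕ) ∧ s.2.2 = (s.2.1 : WithTop ℕ) ∧ d.2.1 ≤ s.2.1 := by
      rcases shape d hdD with ⟨h1, _⟩ | h
      · exact absurd h1 hdk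
      · exact h
    have hmax : RUB lleL D d := by
      intro e he
      obtain ⟨z, hzD, hz1, hz2⟩ := hdir.2 d hdD e he
      have hzd : z = d := by
        rcases hz1 with ⟨e1, e2, e3⟩ | ⟨e1, e2, e3, e4⟩ | ⟨e1, _, _⟩
        · rcases shape z hzD with ⟨f1, _⟩ | ⟨f1, _, _⟩
          · rw [← e2] at f1; exact absurd f1 hdk
          · exact miao_ext e1.symm e2.symm (f1.trans hd22.symm)
        · have hz21 : z.2.1 = s.2.1 := by
            rw [hd22] at e2
            exact_mod_cast e2.symm
          have hzs : z = s := miao_ext (hlevel z hzD) hz21 (by rw [e3, hz21, ← hck])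
          exact absurd (hzs ▸ hzD) hns
        · have := hlevel z hzD; have := hlevel d hdD; omega
      exact hzd ▸ hz2
    rcases hleast d hmax with ⟨_, h2, _⟩ | ⟨_, h2, _, _⟩ | ⟨h1, _, _⟩
    · exact absurd h2.symm hdk
    · rw [hck] at h2
      have : s.2.1 = d.2.1 := by exact_mod_cast h2
      exact absurd this.symm hdk
    · have := hlevel d hdD; omega
  -- consequences
  have hd22le : ∀ d ∈ D, d.2.2 ≤ s.2.2 := by
    intro d hd
    rcases shape d hd with ⟨_, h⟩ | ⟨h1, h2, _⟩
    · exact h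
    · rw [h1, h2]
  have hd_ne : ∀ d ∈ D, d.2.2 ≠ s.2.2 := by
    intro d hd he
    exact hns ((miao_ext (hlevel d hd) (hsecond d hd) he) ▸ hd)
  by_cases hc : s.2.2 = ⊤
  · -- s.2.2 = ⊤ : show unboundedness
    refine ⟨hc, ?_⟩
    intro M
    by_contra hcon
    push_neg at hcon
    have hub' : RUB lleL D (s.1, s.2.1, (M : WithTop ℕ)) := by
      intro d hd
      refine Or.inl ⟨(hlevel d hd), (hsecond d hd), ?_⟩
      have hdt : d.2.2 ≠ ⊤ := fun h => hd_ne d hd (h.trans hc.symm)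
      obtain ⟨jn, hjn⟩ := WithTop.ne_top_iff_exists.mp hdt
      have hjd : (s.1, s.2.1, ((jn : ℕ) : WithTop ℕ)) ∈ D :=
        mem_of_proj hd (hlevel d hd) (hsecond d hd) hjn.symm
      rw [← hjn]
      rcases le_or_gt M jn with hMj | hMj
      · exact absurd hjd (hcon jn hMj)
      · show (jn : WithTop ℕ) ≤ (M : WithTop ℕ)
        exact_mod_cast hMj.le
    rcases hleast _ hub' with ⟨_, _, h3⟩ | ⟨_, h2, _, _⟩ | ⟨h1, _, _⟩
    · rw [hc] at h3
      exact absurd (top_le_iff.mp h3) WithTop.coe_ne_top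
    · rw [hc] at h2
      exact absurd h2.symm WithTop.coe_ne_top
    · simp at h1
  · -- s.2.2 finite : contradiction
    exfalso
    obtain ⟨cv, hcv⟩ := WithTop.ne_top_iff_exists.mp hc
    obtain ⟨d, hd⟩ := hdir.1
    have hbnd : ∀ e ∈ D, ∃ en : ℕ, e.2.2 = (en : WithTop ℕ) ∧ en < cv := by
      intro e he
      have h1e := hd22le e he
      have h2e := hd_ne e he
      rw [← hcv] at h1e h2e
      have het : e.2.2 ≠ ⊤ := fun h => by
        rw [h] at h1e
        exact absurd (top_le_iff.mp h1e) WithTop.coe_ne_top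
      obtain ⟨en, hen⟩ := WithTop.ne_top_iff_exists.mp het
      refine ⟨en, hen.symm, ?_⟩
      rw [← hen] at h1e h2e
      have hle := WithTop.coe_le_coe.mp h1e
      have hne : en ≠ cv := fun h => h2e (by rw [h])
      omega
    obtain ⟨dn, hdn, hdnlt⟩ := hbnd d hd
    have hub' : RUB lleL D (s.1, s.2.1, ((cv - 1 : ℕ) : WithTop ℕ)) := by
      intro e he
      refine Or.inl ⟨(hlevel e he), (hsecond e he), ?_⟩
      obtain ⟨en, hen, henlt⟩ := hbnd e he
      rw [hen]
      show (en : WithTop ℕ) ≤ ((cv - 1 : ℕ) : WithTop ℕ)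
      exact_mod_cast (show en ≤ cv - 1 by omega)
    rcases hleast _ hub' with ⟨_, _, h3⟩ | ⟨_, h2', h3', _⟩ | ⟨h1', _, _⟩
    · rw [← hcv] at h3
      have h3x : (cv : WithTop ℕ) ≤ ((cv - 1 : ℕ) : WithTop ℕ) := h3
      have hcc : cv ≤ cv - 1 := by exact_mod_cast h3x
      omega
    · rw [← hcv] at h2'
      have h2x : (cv : WithTop ℕ) = ((s.2.1 : ℕ) : WithTop ℕ) := h2'
      have hcveq : cv = s.2.1 := by exact_mod_cast h2x
      have h3'' : ((cv - 1 : ℕ) : WithTop ℕ) = ((s.2.1 : ℕ) : WithTop ℕ) := h3'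
      have : cv - 1 = s.2.1 := by exact_mod_cast h3''
      omega
    · simp at h1'

lemma lleL_refl (p : MiaoL) : lleL p p := Or.inl ⟨rfl, rfl, le_refl _⟩

lemma V_open (n : ℕ) : RScottOpen lleL {p : MiaoL | n ≤ p.1} := by
  constructor
  · intro x hx y hxy
    have hx' : n ≤ x.1 := hx
    rcases level_le hxy with h | h
    · show n ≤ y.1; omega
    · show n ≤ y.1; omega
  · intro D hdir s hlub hs
    by_cases hsD : s ∈ D
    · exact ⟨s, hsD, hs⟩
    · obtain ⟨-, h⟩ := lub_struct hdir hlub hsD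
      obtain ⟨j, -, hj⟩ := h 0
      exact ⟨_, hj, hs⟩

def BoxSet (a b : ℕ → ℕ) (m : ℕ) : Set MiaoL :=
  {p | (p.1 = a m ∧ p.2.1 ≤ b m ∧ p.2.2 ≤ (b m : WithTop ℕ)) ∨
       (p.1 = a m ∧ p.2.1 = b m) ∨
       (p.1 + 1 = a m ∧ p.2.2 ≤ (b m : WithTop ℕ))}

def Yset (a b : ℕ → ℕ) (N : ℕ) : Set MiaoL :=
  {p | ∃ m, N ≤ m ∧ p ∈ BoxSet a b m}

lemma Box_lower {a b : ℕ → ℕ} {m : ℕ} {p q : MiaoL} (h : lleL p q)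
    (hq : q ∈ BoxSet a b m) : p ∈ BoxSet a b m := by
  rcases h with ⟨h1, h2, h3⟩ | ⟨h1, h2, h3, h4⟩ | ⟨h1, h2, h3⟩ <;>
    rcases hq with ⟨e1, e2, e3⟩ | ⟨e1, e2⟩ | ⟨e1, e2⟩
  · exact Or.inl ⟨h1.trans e1, h2 ▸ e2, le_trans h3 e3⟩
  · exact Or.inr (Or.inl ⟨h1.trans e1, h2.trans e2⟩)
  · exact Or.inr (Or.inr ⟨by omega, le_trans h3 e2⟩)
  · refine Or.inl ⟨h1.trans e1, le_trans h4 e2, ?_⟩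
    rw [h2]
    exact_mod_cast e2
  · refine Or.inl ⟨h1.trans e1, by omega, ?_⟩
    rw [h2, e2]
  · refine Or.inr (Or.inr ⟨by omega, ?_⟩)
    rw [h2, ← h3]
    exact e2
  · rw [h2] at e3
    exact absurd (top_le_iff.mp e3) WithTop.coe_ne_top
  · refine Or.inr (Or.inr ⟨by omega, ?_⟩)
    rw [← e2]
    exact h3
  · rw [h2] at e2
    exact absurd (top_le_iff.mp e2) WithTop.coe_ne_top

lemma Y_open_compl (a b : ℕ → ℕ) (ha : ∀ n, n ≤ a n) (N : ℕ) :
    RScottOpen lleL (Yset a b N)ᶜ := by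
  constructor
  · intro x hx y hxy hy
    obtain ⟨m, hm, hbox⟩ := hy
    exact hx ⟨m, hm, Box_lower hxy hbox⟩
  · intro D hdir s hlub hs
    by_cases hsD : s ∈ D
    · exact ⟨s, hsD, hs⟩
    obtain ⟨htop, hD⟩ := lub_struct hdir hlub hsD
    set T := (Finset.range (s.1 + 2)).sup b with hT
    obtain ⟨j, hjT, hjD⟩ := hD (T + 1)
    refine ⟨_, hjD, ?_⟩
    rintro ⟨m, hm, hbox⟩
    have hbT : ∀ m' < s.1 + 2, b m' ≤ T := fun m' hm' =>
      Finset.le_sup (Finset.mem_range.mpr hm')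
    rcases hbox with ⟨e1, e2, e3⟩ | ⟨e1, e2⟩ | ⟨e1, e2⟩
    · have ham : a m = s.1 := e1.symm
      have hma : m ≤ a m := ha m
      have e3' : (j : WithTop ℕ) ≤ ((b m : ℕ) : WithTop ℕ) := e3
      have hjb : j ≤ b m := by exact_mod_cast e3'
      have := hbT m (by omega)
      omega
    · apply hs
      exact ⟨m, hm, Or.inr (Or.inl ⟨e1, e2⟩)⟩
    · have ham : a m = s.1 + 1 := e1.symm
      have hma : m ≤ a m := ha m
      have e2' : (j : WithTop ℕ) ≤ ((b m : ℕ) : WithTop ℕ) := e2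
      have hjb : j ≤ b m := by exact_mod_cast e2'
      have := hbT m (by omega)
      omega

/-- `L` itself is not a KF-set of `L`: there is no nonempty filtered family
`𝒦` of Scott-compact saturated subsets of `L` such that `L` is a minimal closed set
intersecting every member of `𝒦`. -/
theorem univ_not_KF :
    ¬ ∃ 𝒦 : Set (Set MiaoL), 𝒦.Nonempty ∧
      (∀ K ∈ 𝒦, RCompact lleL K ∧ RSat lleL K) ∧
      (∀ K₁ ∈ 𝒦, ∀ K₂ ∈ 𝒦, ∃ K₃ ∈ 𝒦, K₃ ⊆ K₁ ∩ K₂) ∧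
      (∀ K ∈ 𝒦, ((Set.univ : Set MiaoL) ∩ K).Nonempty) ∧
      (∀ C : Set MiaoL, RScottClosed lleL C → (∀ K ∈ 𝒦, (C ∩ K).Nonempty) →
        C = Set.univ) := by
  classical
  rintro ⟨𝒦, h𝒦ne, hcs, hfil, hmeet, hmin⟩
  -- every member of 𝒦 is nonempty
  have hKne : ∀ K ∈ 𝒦, K.Nonempty := by
    intro K hK
    obtain ⟨p, -, hp⟩ := hmeet K hK
    exact ⟨p, hp⟩
  -- for each n there is a member of 𝒦 inside {p | n ≤ p.1}
  have hKV : ∀ n : ℕ, ∃ K ∈ 𝒦, ∀ p ∈ K, n ≤ p.1 := by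
    intro n
    by_contra hn
    push_neg at hn
    have hC : RScottClosed lleL {p : MiaoL | n ≤ p.1}ᶜ := by
      show RScottOpen lleL _
      rw [compl_compl]
      exact V_open n
    have huniv := hmin _ hC (by
      intro K hK
      obtain ⟨p, hpK, hpn⟩ := hn K hK
      exact ⟨p, not_le.mpr hpn, hpK⟩)
    have : ((n, 0, (0 : WithTop ℕ)) : MiaoL) ∈ {p : MiaoL | n ≤ p.1}ᶜ := by
      rw [huniv]; trivial
    exact this (le_refl n)
  obtain ⟨K₀, hK₀⟩ := h𝒦ne
  -- points of K₀ at arbitrarily high levels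
  have hy : ∀ n : ℕ, ∃ p : MiaoL, p ∈ K₀ ∧ n ≤ p.1 := by
    intro n
    obtain ⟨K, hK, hKlev⟩ := hKV n
    obtain ⟨K₃, hK₃, hsub⟩ := hfil K₀ hK₀ K hK
    obtain ⟨p, hp⟩ := hKne K₃ hK₃
    exact ⟨p, (hsub hp).1, hKlev p (hsub hp).2⟩
  choose y hyK hylev using hy
  set a : ℕ → ℕ := fun n => (y n).1 with haa
  set b : ℕ → ℕ := fun n => (y n).2.1 with hbb
  have hx : ∀ n : ℕ, ((a n, b n, (⊤ : WithTop ℕ)) : MiaoL) ∈ K₀ := by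
    intro n
    exact (hcs K₀ hK₀).2 (y n) (hyK n) _ (Or.inl ⟨rfl, rfl, le_top⟩)
  -- compactness of K₀ against the cover by complements of the Ysets
  obtain ⟨𝒱, h𝒱U, h𝒱fin, h𝒱cov⟩ :=
    (hcs K₀ hK₀).1 {S | ∃ m, S = (Yset a b m)ᶜ}
      (by rintro S ⟨m, rfl⟩; exact Y_open_compl a b hylev m)
      (by
        intro p hp
        refine ⟨(Yset a b (p.1 + 2))ᶜ, ⟨p.1 + 2, rfl⟩, ?_⟩
        rintro ⟨m, hm, hbox⟩
        have hma : m ≤ a m := hylev m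
        rcases hbox with ⟨e1, -, -⟩ | ⟨e1, -⟩ | ⟨e1, -⟩ <;> omega)
  set f : Set MiaoL → ℕ := fun S => if h : ∃ m, S = (Yset a b m)ᶜ then h.choose else 0
    with hf
  obtain ⟨N, hN⟩ := (h𝒱fin.image f).bddAbove
  obtain ⟨V, hV𝒱, hxV⟩ := h𝒱cov (hx (N + 1))
  have hex : ∃ m, V = (Yset a b m)ᶜ := h𝒱U hV𝒱
  have hfV : V = (Yset a b (f V))ᶜ := by
    rw [hf]
    simp only [dif_pos hex]
    exact hex.choose_spec
  have hle : f V ≤ N := hN (Set.mem_image_of_mem f hV𝒱)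
  rw [hfV] at hxV
  exact hxV ⟨N + 1, by omega, Or.inr (Or.inl ⟨rfl, rfl⟩)⟩
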